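/- Assuming the Nešetřil–Rödl theorem that the class of finite ordered n-uniform hypergraphs is Ramsey, the class of finite ordered 2-partite 2-uniform hypergraphs (ordered bipartite graphs with P_0 < P_1 and edges only between parts) has the Ramsey property. -/

import Mathlib

/-- A finite ordered graph (ordered 2-uniform hypergraph): finite strict total order with a
symmetric irreflexive adjacency relation. -/
structure OrdGraph where
  carrier : Type
  [fin : Fintype carrier]
  lt : carrier → carrier → Prop
  strict : IsStrictTotalOrder carrier lt
  adj : carrier → carrier → Prop
  adj_symm : ∀ x y : carrier, adj x y → adj y x
  adj_irrefl : ∀ x : carrier, ¬ adj x x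

attribute [instance] OrdGraph.fin

/-- An embedding of ordered graphs. -/
structure OGEmb (A B : OrdGraph) where
  toFun : A.carrier → B.carrier
  inj : Function.Injective toFun
  map_lt : ∀ x y : A.carrier, A.lt x y ↔ B.lt (toFun x) (toFun y)
  map_adj : ∀ x y : A.carrier, A.adj x y ↔ B.adj (toFun x) (toFun y)

/-- Composition of ordered-graph embeddings. -/
def OGEmb.comp {A B C : OrdGraph} (g : OGEmb B C) (f : OGEmb A B) : OGEmb A C where
  toFun := g.toFun ∘ f.toFun
  inj := g.inj.comp f.inj
  map_lt := fun x y => (f.map_lt x y).trans (g.map_lt _ _)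
  map_adj := fun x y => (f.map_adj x y).trans (g.map_adj _ _)

/-- A finite ordered bipartite graph: parts `P_0 < P_1` (given by `part : carrier → Fin 2`),
a strict total order with `P_0` before `P_1`, and a symmetric irreflexive adjacency with
edges only between the parts. -/
structure OrdBipGraph where
  carrier : Type
  [fin : Fintype carrier]
  lt : carrier → carrier → Prop
  strict : IsStrictTotalOrder carrier lt
  part : carrier → Fin 2
  parts_ordered : ∀ x y : carrier, part x < part y → lt x y
  adj : carrier → carrier → Prop
  adj_symm : ∀ x y : carrier, adj x y → adj y x
  adj_irrefl : ∀ x : carrier, ¬ adj x x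
  adj_cross : ∀ x y : carrier, adj x y → part x ≠ part y

attribute [instance] OrdBipGraph.fin

/-- An embedding of ordered bipartite graphs. -/
structure OBEmb (A B : OrdBipGraph) where
  toFun : A.carrier → B.carrier
  inj : Function.Injective toFun
  map_lt : ∀ x y : A.carrier, A.lt x y ↔ B.lt (toFun x) (toFun y)
  map_adj : ∀ x y : A.carrier, A.adj x y ↔ B.adj (toFun x) (toFun y)
  map_part : ∀ x : A.carrier, B.part (toFun x) = A.part x

/-- Composition of ordered-bipartite-graph embeddings. -/
def OBEmb.comp {A B C : OrdBipGraph} (g : OBEmb B C) (f : OBEmb A B) : OBEmb A C where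
  toFun := g.toFun ∘ f.toFun
  inj := g.inj.comp f.inj
  map_lt := fun x y => (f.map_lt x y).trans (g.map_lt _ _)
  map_adj := fun x y => (f.map_adj x y).trans (g.map_adj _ _)
  map_part := fun x => (g.map_part _).trans (f.map_part x)

/-- Two embeddings of ordered bipartite graphs with the same underlying function are equal. -/
lemma OBEmb.ext' {A B : OrdBipGraph} {f g : OBEmb A B} (h : f.toFun = g.toFun) : f = g := by
  cases f; cases g; cases h; rfl

private lemma fin2_cases {a b : Fin 2} (h : a ≠ b) : a = 0 ∧ b = 1 ∨ a = 1 ∧ b = 0 := by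
  omega

/-- The underlying ordered graph of an ordered bipartite graph. -/
def toOG (A : OrdBipGraph) : OrdGraph where
  carrier := A.carrier
  fin := A.fin
  lt := A.lt
  strict := A.strict
  adj := A.adj
  adj_symm := A.adj_symm
  adj_irrefl := A.adj_irrefl

/-- View an `OBEmb` as an `OGEmb` of the underlying ordered graphs. -/
def obToOg {A B : OrdBipGraph} (f : OBEmb A B) : OGEmb (toOG A) (toOG B) where
  toFun := f.toFun
  inj := f.inj
  map_lt := f.map_lt
  map_adj := f.map_adj

/-- The bipartite double of an ordered graph `X`: parts `{0} × X` and `{1} × X`,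
ordered lexicographically, with an edge between `(0, v)` and `(1, w)` iff `v < w` and
`v w` is an edge of `X`. -/
def DG (X : OrdGraph) : OrdBipGraph where
  carrier := Fin 2 × X.carrier
  lt p q := p.1 < q.1 ∨ (p.1 = q.1 ∧ X.lt p.2 q.2)
  strict := by
    have hs := X.strict
    refine { trichotomous := ?_, irrefl := ?_, trans := ?_ }
    · intro p q
      rcases lt_trichotomy p.1 q.1 with h | h | h
      · exact fun h1 _ => absurd (Or.inl h) h1
      · intro h1 h2
        exact Prod.ext h (hs.trichotomous p.2 q.2 (fun h3 => h1 (Or.inr ⟨h, h3⟩))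
          (fun h3 => h2 (Or.inr ⟨h.symm, h3⟩)))
      · exact fun _ h2 => absurd (Or.inl h) h2
    · intro p h
      rcases h with h | ⟨_, h⟩
      · exact lt_irrefl _ h
      · exact hs.irrefl _ h
    · intro p q r hpq hqr
      rcases hpq with h1 | ⟨e1, h1⟩ <;> rcases hqr with h2 | ⟨e2, h2⟩
      · exact Or.inl (h1.trans h2)
      · exact Or.inl (e2 ▸ h1)
      · exact Or.inl (e1 ▸ h2)
      · exact Or.inr ⟨e1.trans e2, hs.trans _ _ _ h1 h2⟩
  part p := p.1
  parts_ordered := fun _ _ h => Or.inl h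
  adj p q := (p.1 = 0 ∧ q.1 = 1 ∧ X.lt p.2 q.2 ∧ X.adj p.2 q.2) ∨
    (p.1 = 1 ∧ q.1 = 0 ∧ X.lt q.2 p.2 ∧ X.adj q.2 p.2)
  adj_symm := by
    rintro p q (⟨h0, h1, hl, ha⟩ | ⟨h0, h1, hl, ha⟩)
    · exact Or.inr ⟨h1, h0, hl, ha⟩
    · exact Or.inl ⟨h1, h0, hl, ha⟩
  adj_irrefl := by
    rintro p (⟨h0, h1, _, _⟩ | ⟨h0, h1, _, _⟩) <;> omega
  adj_cross := by
    rintro p q (⟨h0, h1, _, _⟩ | ⟨h0, h1, _, _⟩) <;> simp [h0, h1]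

/-- Transfer an ordered-graph embedding `toOG A → C` to a bipartite embedding `A → DG C`. -/
def Phi {A : OrdBipGraph} {C : OrdGraph} (h : OGEmb (toOG A) C) : OBEmb A (DG C) where
  toFun a := (A.part a, h.toFun a)
  inj := by
    intro x y hxy
    exact h.inj (congrArg Prod.snd hxy)
  map_lt := by
    intro x y
    have hst := A.strict
    have cst := C.strict
    constructor
    · intro hxy
      rcases lt_trichotomy (A.part x) (A.part y) with hp | hp | hp
      · exact Or.inl hp
      · exact Or.inr ⟨hp, (h.map_lt x y).mp hxy⟩
      · exact absurd hxy (asymm (r := A.lt) (A.parts_ordered _ _ hp))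
    · rintro (hp | ⟨hp, hl⟩)
      · exact A.parts_ordered _ _ hp
      · exact (h.map_lt x y).mpr hl
  map_adj := by
    intro x y
    constructor
    · intro hxy
      rcases fin2_cases (A.adj_cross _ _ hxy) with ⟨h0, h1⟩ | ⟨h0, h1⟩
      · refine Or.inl ⟨h0, h1, (h.map_lt x y).mp ?_, (h.map_adj x y).mp hxy⟩
        exact A.parts_ordered _ _ (by rw [h0, h1]; decide)
      · refine Or.inr ⟨h0, h1, (h.map_lt y x).mp ?_, (h.map_adj y x).mp (A.adj_symm _ _ hxy)⟩
        exact A.parts_ordered _ _ (by rw [h0, h1]; decide)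
    · rintro (⟨_, _, _, ha⟩ | ⟨_, _, _, ha⟩)
      · exact (h.map_adj x y).mpr ha
      · exact A.adj_symm _ _ ((h.map_adj y x).mpr ha)
  map_part := fun _ => rfl

lemma Phi_comp {A B : OrdBipGraph} {C : OrdGraph} (g : OGEmb (toOG B) C) (f : OBEmb A B) :
    (Phi g).comp f = Phi (g.comp (obToOg f)) := by
  apply OBEmb.ext'
  funext a
  show (B.part (f.toFun a), g.toFun (f.toFun a)) = (A.part a, g.toFun (f.toFun a))
  rw [f.map_part]

/-- Assuming the Nešetřil–Rödl theorem that the class of finite ordered graphs (ordered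
2-uniform hypergraphs) is a Ramsey class, the class of finite ordered bipartite graphs
(2-partite 2-uniform hypergraphs with `P_0 < P_1` and edges only between the parts) has
the Ramsey property. (These structures are rigid, so colorings of copies are the same as
colorings of embeddings.) -/
theorem stmt_18
    (NR : ∀ A B : OrdGraph, ∀ k : ℕ, ∃ C : OrdGraph, ∀ col : OGEmb A C → Fin k,
      ∃ g : OGEmb B C, ∀ f f' : OGEmb A B, col (g.comp f) = col (g.comp f')) :
    ∀ A B : OrdBipGraph, ∀ k : ℕ, ∃ C : OrdBipGraph, ∀ col : OBEmb A C → Fin k,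
      ∃ g : OBEmb B C, ∀ f f' : OBEmb A B, col (g.comp f) = col (g.comp f') := by
  intro A B k
  obtain ⟨C, hC⟩ := NR (toOG A) (toOG B) k
  refine ⟨DG C, fun col => ?_⟩
  obtain ⟨g, hg⟩ := hC (fun h => col (Phi h))
  refine ⟨Phi g, fun f f' => ?_⟩
  rw [Phi_comp g f, Phi_comp g f']
  exact hg (obToOg f) (obToOg f')
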